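/- arXiv:2011.02343 — 3 statements merged into one kernel-verified Lean document; each statement's English description precedes it below -/
import Mathlib

section
/- Let 0 < q < 1 and 0 < W₀ < 1 < W₁. For w ∈ [W₀, W₁], define h_k(w) = (w^{k−1}−1)/(k−1) for k ≠ 1, so h₂(w) = w−1 and h_q(w) = (w^{q−1}−1)/(q−1). Then for all w ∈ [W₀, W₁] with w ≠ 1: W₀^{2(2−q)} ≤ (h₂(w)/h_q(w))² ≤ W₁^{2(2−q)}. -/
open Real

lemma h2_over_hq_mvt (q : ℝ) (hq1 : q < 1) {w : ℝ} (hw : 0 < w) (hne : w ≠ 1) :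
    ∃ c, (min w 1 < c ∧ c < max w 1) ∧
      (w - 1) / ((w ^ (q - 1) - 1) / (q - 1)) = c ^ (2 - q) := by
  have hab : min w 1 < max w 1 := by
    rcases lt_or_gt_of_ne hne with h | h
    · rw [min_eq_left h.le, max_eq_right h.le]; exact h
    · rw [min_eq_right h.le, max_eq_left h.le]; exact h
  have hmin : 0 < min w 1 := lt_min hw one_pos
  have hderiv : ∀ x ∈ Set.Ioo (min w 1) (max w 1),
      HasDerivAt (fun x : ℝ => x ^ (q - 1)) ((q - 1) * x ^ (q - 1 - 1)) x := by
    intro x hx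
    exact Real.hasDerivAt_rpow_const (Or.inl (ne_of_gt (hmin.trans hx.1)))
  have hcont : ContinuousOn (fun x : ℝ => x ^ (q - 1)) (Set.Icc (min w 1) (max w 1)) := by
    intro x hx
    have hx0 : x ≠ 0 := ne_of_gt (lt_of_lt_of_le hmin hx.1)
    exact (Real.hasDerivAt_rpow_const (p := q - 1) (Or.inl hx0)).continuousAt.continuousWithinAt
  obtain ⟨c, hc, heq⟩ := exists_hasDerivAt_eq_slope (fun x : ℝ => x ^ (q - 1))
    (fun x => (q - 1) * x ^ (q - 1 - 1)) hab hcont hderiv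
  have hc0 : 0 < c := hmin.trans hc.1
  have hcq : (0:ℝ) < c ^ (q - 2) := Real.rpow_pos_of_pos hc0 _
  have hw1 : w - 1 ≠ 0 := sub_ne_zero.mpr hne
  have hq1' : q - 1 ≠ 0 := by linarith
  -- rewrite slope symmetrically
  have hslope : (q - 1) * c ^ (q - 2) = (w ^ (q - 1) - 1) / (w - 1) := by
    have h1 : q - 1 - 1 = q - 2 := by ring
    rw [h1] at heq
    rcases lt_or_gt_of_ne hne with h | h
    · rw [min_eq_left h.le, max_eq_right h.le] at heq
      rw [heq, Real.one_rpow]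
      have h1w : (1:ℝ) - w ≠ 0 := sub_ne_zero.mpr (Ne.symm hne)
      field_simp
      ring
    · rw [min_eq_right h.le, max_eq_left h.le] at heq
      rw [heq, Real.one_rpow]
  have hkey : w ^ (q - 1) - 1 = (q - 1) * c ^ (q - 2) * (w - 1) := by
    rw [hslope]; field_simp
  refine ⟨c, hc, ?_⟩
  rw [show (2:ℝ) - q = -(q - 2) by ring, Real.rpow_neg hc0.le, hkey]
  field_simp

theorem h2_over_hq_bounds (q W₀ W₁ : ℝ) (hq0 : 0 < q) (hq1 : q < 1)
    (hW0 : 0 < W₀) (hW01 : W₀ < 1) (hW1 : 1 < W₁) :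
    ∀ w : ℝ, w ∈ Set.Icc W₀ W₁ → w ≠ 1 →
      W₀ ^ (2 * (2 - q)) ≤ ((w - 1) / ((w ^ (q - 1) - 1) / (q - 1))) ^ 2 ∧
      ((w - 1) / ((w ^ (q - 1) - 1) / (q - 1))) ^ 2 ≤ W₁ ^ (2 * (2 - q)) := by
  intro w hw hne
  obtain ⟨hwl, hwr⟩ := hw
  have hw0 : 0 < w := hW0.trans_le hwl
  obtain ⟨c, ⟨hc1, hc2⟩, heq⟩ := h2_over_hq_mvt q hq1 hw0 hne
  have hcW0 : W₀ ≤ c := le_trans (le_min hwl hW01.le) hc1.le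
  have hcW1 : c ≤ W₁ := le_trans hc2.le (max_le hwr hW1.le)
  have hc0 : 0 < c := hW0.trans_le hcW0
  have h2q : (0:ℝ) ≤ 2 - q := by linarith
  have hlo : W₀ ^ (2 - q) ≤ c ^ (2 - q) := Real.rpow_le_rpow hW0.le hcW0 h2q
  have hhi : c ^ (2 - q) ≤ W₁ ^ (2 - q) := Real.rpow_le_rpow hc0.le hcW1 h2q
  have hsq : ∀ x : ℝ, 0 ≤ x → x ^ (2 * (2 - q)) = (x ^ (2 - q)) ^ 2 := by
    intro x hx
    rw [mul_comm, Real.rpow_mul hx, show (2:ℝ) = ((2:ℕ):ℝ) by norm_num,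
      Real.rpow_natCast]
  rw [heq, hsq W₀ hW0.le, hsq W₁ (by positivity : (0:ℝ) ≤ W₁)]
  constructor
  · exact pow_le_pow_left₀ (Real.rpow_nonneg hW0.le _) hlo 2
  · exact pow_le_pow_left₀ (Real.rpow_nonneg (le_of_lt (hc0)) _) hhi 2
end

section
/- Let λ ≥ 2, and let ρ_∞ be a probability density on ℝ^N with ∫ρ_∞ = 1, ∫ y ρ_∞(y) dy = 0, and finite moments ∫|y|²ρ_∞ and ∫|y|^λρ_∞. Then for all x ∈ ℝ^N: 0 ≤ (V_λ * ρ_∞)(x) − V_λ(x) ≤ κ(N,λ)·[∫|y|²ρ_∞(y) dy · |x|^{λ−2} + ∫|y|^λ ρ_∞(y) dy], where V_λ(x) = |x|^λ/λ and κ(N,λ) > 0 is a constant depending only on N and λ. -/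
set_option maxHeartbeats 1000000

open Real MeasureTheory

lemma tangent_le_rpow {p t r : ℝ} (hp : 1 ≤ p) (ht : 0 ≤ t) (hr : 0 < r) :
    r ^ p + p * r ^ (p - 1) * (t - r) ≤ t ^ p := by
  have hs : -1 ≤ t / r - 1 := by
    have : 0 ≤ t / r := div_nonneg ht hr.le
    linarith
  have h := one_add_mul_self_le_rpow_one_add hs hp
  have h1 : (1 : ℝ) + (t / r - 1) = t / r := by ring
  rw [h1, Real.div_rpow ht hr.le] at h
  have hrp : 0 < r ^ p := Real.rpow_pos_of_pos hr p
  have h3 := mul_le_mul_of_nonneg_right h hrp.le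
  rw [div_mul_cancel₀ _ hrp.ne'] at h3
  have h2 : r ^ (p - 1) = r ^ p / r := by
    rw [Real.rpow_sub hr, Real.rpow_one]
  rw [h2]
  calc r ^ p + p * (r ^ p / r) * (t - r)
      = (1 + p * (t / r - 1)) * r ^ p := by field_simp
    _ ≤ t ^ p := h3

lemma rpow_le_tangent {p t r : ℝ} (hp0 : 0 ≤ p) (hp : p ≤ 1) (ht : 0 ≤ t) (hr : 0 < r) :
    t ^ p ≤ r ^ p + p * r ^ (p - 1) * (t - r) := by
  have hs : -1 ≤ t / r - 1 := by
    have : 0 ≤ t / r := div_nonneg ht hr.le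
    linarith
  have h := rpow_one_add_le_one_add_mul_self hs hp0 hp
  have h1 : (1 : ℝ) + (t / r - 1) = t / r := by ring
  rw [h1, Real.div_rpow ht hr.le] at h
  have hrp : 0 < r ^ p := Real.rpow_pos_of_pos hr p
  have h3 := mul_le_mul_of_nonneg_right h hrp.le
  rw [div_mul_cancel₀ _ hrp.ne'] at h3
  have h2 : r ^ (p - 1) = r ^ p / r := by
    rw [Real.rpow_sub hr, Real.rpow_one]
  rw [h2]
  calc t ^ p ≤ (1 + p * (t / r - 1)) * r ^ p := h3
    _ = r ^ p + p * (r ^ p / r) * (t - r) := by field_simp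

lemma Kfact1 {μ : ℝ} (hμ : 1 ≤ μ) : μ - 1 ≤ (μ - 1) * ((4:ℝ) ^ (μ - 1) + 4) := by
  have h4θ : (0:ℝ) ≤ (4:ℝ) ^ (μ - 1) := Real.rpow_nonneg (by norm_num) _
  nlinarith [mul_nonneg (show (0:ℝ) ≤ μ - 1 by linarith) (show (0:ℝ) ≤ (4:ℝ) ^ (μ - 1) + 3 by linarith)]

lemma Kfact4 {μ : ℝ} (hμ : 1 ≤ μ) : 4 * (μ - 1) ≤ (μ - 1) * ((4:ℝ) ^ (μ - 1) + 4) := by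
  have h4θ : (0:ℝ) ≤ (4:ℝ) ^ (μ - 1) := Real.rpow_nonneg (by norm_num) _
  nlinarith [mul_nonneg (show (0:ℝ) ≤ μ - 1 by linarith) h4θ]

lemma Kfact5 {μ : ℝ} (hμ : 1 ≤ μ) :
    (μ - 1) * (4:ℝ) ^ (μ - 1) ≤ (μ - 1) * ((4:ℝ) ^ (μ - 1) + 4) := by
  nlinarith [show (0:ℝ) ≤ μ - 1 by linarith]

lemma core_scalar (μ : ℝ) (hμ : 1 ≤ μ) :
    ∃ C : ℝ, 0 < C ∧ ∀ a b c : ℝ, 0 ≤ a → 0 ≤ c → b ^ 2 ≤ a * c →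
      (a ^ μ ≤ (a - 2 * b + c) ^ μ + 2 * μ * a ^ (μ - 1) * b ∧
       (a - 2 * b + c) ^ μ - a ^ μ + 2 * μ * a ^ (μ - 1) * b ≤
         C * (a ^ (μ - 1) * c + c ^ μ)) := by
  have hμ0 : (0:ℝ) < μ := by linarith
  obtain ⟨K, hK⟩ : ∃ K : ℝ, K = (μ - 1) * ((4:ℝ) ^ (μ - 1) + 4) := ⟨_, rfl⟩
  have h4θ : (0:ℝ) ≤ (4:ℝ) ^ (μ - 1) := Real.rpow_nonneg (by norm_num) _
  have hK0 : 0 ≤ K := hK ▸ mul_nonneg (by linarith) (by linarith)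
  have h9 : (0:ℝ) < (9:ℝ) ^ μ := Real.rpow_pos_of_pos (by norm_num) _
  obtain ⟨C, hCdef⟩ : ∃ C : ℝ, C = (9:ℝ) ^ μ + 4 * μ + 7 * μ * K + μ + 1 := ⟨_, rfl⟩
  refine ⟨C, by rw [hCdef]; nlinarith [mul_nonneg (mul_nonneg (by norm_num : (0:ℝ) ≤ 7) hμ0.le) hK0], ?_⟩
  have hCK : 7 * μ * K + μ ≤ C := by rw [hCdef]; nlinarith
  have hC1 : 1 ≤ C := by rw [hCdef]; nlinarith [mul_nonneg (mul_nonneg (by norm_num : (0:ℝ) ≤ 7) hμ0.le) hK0]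
  intro a b c ha hc hb
  have hcμ0 : 0 ≤ c ^ μ := Real.rpow_nonneg hc _
  rcases ha.eq_or_lt with h0 | ha'
  · -- a = 0
    have hb0 : b = 0 := by nlinarith [sq_nonneg b]
    rw [← h0, hb0]
    have haz : (0:ℝ) - 2 * 0 + c = c := by ring
    rw [haz]
    have h0μ : (0:ℝ) ^ μ = 0 := Real.zero_rpow hμ0.ne'
    have h0θ : 0 ≤ (0:ℝ) ^ (μ - 1) * c := mul_nonneg (Real.rpow_nonneg le_rfl _) hc
    rw [h0μ]
    constructor
    · nlinarith
    · nlinarith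
  -- a > 0
  obtain ⟨s, hsdef⟩ : ∃ s : ℝ, s = a - 2 * b + c := ⟨_, rfl⟩
  rw [show a - 2 * b + c = s from hsdef.symm]
  have hu2 : Real.sqrt a ^ 2 = a := Real.sq_sqrt ha
  have hv2 : Real.sqrt c ^ 2 = c := Real.sq_sqrt hc
  have hu0 : 0 ≤ Real.sqrt a := Real.sqrt_nonneg a
  have hv0 : 0 ≤ Real.sqrt c := Real.sqrt_nonneg c
  have habs : |b| ≤ Real.sqrt a * Real.sqrt c := by
    have h1 : |b| = Real.sqrt (b ^ 2) := (Real.sqrt_sq_eq_abs b).symm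
    rw [h1, ← Real.sqrt_mul ha]
    exact Real.sqrt_le_sqrt hb
  have hbub : b ≤ Real.sqrt a * Real.sqrt c := (abs_le.mp habs).2
  have hblb : -(Real.sqrt a * Real.sqrt c) ≤ b := (abs_le.mp habs).1
  have hs0 : 0 ≤ s := by nlinarith [sq_nonneg (Real.sqrt a - Real.sqrt c)]
  have haθ : 0 ≤ a ^ (μ - 1) := Real.rpow_nonneg ha _
  have hμθ : 0 ≤ μ - 1 := by linarith
  -- lower bound
  have hlow := tangent_le_rpow hμ hs0 ha'
  have hlower : a ^ μ ≤ s ^ μ + 2 * μ * a ^ (μ - 1) * b := by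
    have hpos : 0 ≤ μ * (a ^ (μ - 1) * c) := by positivity
    have hexp : μ * a ^ (μ - 1) * (s - a) = μ * (a ^ (μ - 1) * c) - 2 * μ * a ^ (μ - 1) * b := by
      rw [hsdef]; ring
    rw [hexp] at hlow
    linarith
  refine ⟨hlower, ?_⟩
  -- upper bound
  by_cases hc4 : a ≤ 4 * c
  · -- c large
    have hsa : Real.sqrt a ≤ 2 * Real.sqrt c := by
      have h1 : Real.sqrt a ≤ Real.sqrt (4 * c) := Real.sqrt_le_sqrt hc4
      rwa [show (4:ℝ) * c = 2 ^ 2 * c by ring, Real.sqrt_mul (by norm_num) c,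
        Real.sqrt_sq (by norm_num)] at h1
    have hs9 : s ≤ 9 * c := by nlinarith
    have hsμ : s ^ μ ≤ (9:ℝ) ^ μ * c ^ μ := by
      calc s ^ μ ≤ (9 * c) ^ μ := Real.rpow_le_rpow hs0 hs9 hμ0.le
        _ = (9:ℝ) ^ μ * c ^ μ := Real.mul_rpow (by norm_num) hc
    have hbc : b ≤ 2 * c := by nlinarith
    have haμ0 : 0 ≤ a ^ μ := Real.rpow_nonneg ha _
    have h1 : 2 * μ * a ^ (μ - 1) * b ≤ 4 * μ * (a ^ (μ - 1) * c) :=  by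
      nlinarith [mul_le_mul_of_nonneg_left hbc (by positivity : (0:ℝ) ≤ 2 * μ * a ^ (μ - 1))]
    have hac0 : 0 ≤ a ^ (μ - 1) * c := mul_nonneg haθ hc
    have hmK0 : 0 ≤ 7 * μ * K := mul_nonneg (mul_nonneg (by norm_num) hμ0.le) hK0
    have hC9 : (9:ℝ) ^ μ ≤ C := by rw [hCdef]; linarith
    have hC4 : 4 * μ ≤ C := by rw [hCdef]; linarith
    nlinarith [mul_le_mul_of_nonneg_right hC9 hcμ0, mul_le_mul_of_nonneg_right hC4 hac0]
  · -- c small : 4 * c < a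
    push_neg at hc4
    have hvu : 2 * Real.sqrt c ≤ Real.sqrt a := by
      have h1 : Real.sqrt (4 * c) ≤ Real.sqrt a := Real.sqrt_le_sqrt (by linarith)
      rwa [show (4:ℝ) * c = 2 ^ 2 * c by ring, Real.sqrt_mul (by norm_num) c,
        Real.sqrt_sq (by norm_num)] at h1
    have hsge : a / 4 ≤ s := by
      have h5 : Real.sqrt a / 2 ≤ Real.sqrt a - Real.sqrt c := by linarith
      nlinarith [mul_le_mul h5 h5 (by positivity) (by linarith)]
    have hsle : s ≤ 4 * a := by nlinarith
    have hspos : 0 < s := lt_of_lt_of_le (by linarith) hsge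
    have hfo := tangent_le_rpow hμ ha hspos
    have hD : s ^ μ - a ^ μ ≤ μ * s ^ (μ - 1) * (s - a) := by linarith
    have haθ2 : 0 ≤ a ^ (μ - 2) := Real.rpow_nonneg ha _
    have hsub : μ - 1 - 1 = μ - 2 := by ring
    have hsq0 : 0 ≤ a ^ (μ - 2) * (s - a) ^ 2 := mul_nonneg haθ2 (sq_nonneg _)
    have hkey : (s ^ (μ - 1) - a ^ (μ - 1)) * (s - a) ≤ K * (a ^ (μ - 2) * (s - a) ^ 2) := by
      rcases le_total (μ - 1) 1 with hθ1 | hθ1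
      · have hK1 : μ - 1 ≤ K := by rw [hK]; exact Kfact1 hμ
        have hK4 : 4 * (μ - 1) ≤ K := by rw [hK]; exact Kfact4 hμ
        rcases le_total a s with has | has
        · have h := rpow_le_tangent hμθ hθ1 hs0 ha'
          rw [hsub] at h
          have hfac : s ^ (μ - 1) - a ^ (μ - 1) ≤ (μ - 1) * a ^ (μ - 2) * (s - a) := by linarith
          have h2 := mul_le_mul_of_nonneg_right hfac (by linarith : (0:ℝ) ≤ s - a)
          have hKX := mul_le_mul_of_nonneg_right hK1 hsq0
          linarith [h2, hKX]
        · have h := rpow_le_tangent hμθ hθ1 ha hspos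
          have hfac : a ^ (μ - 1) - s ^ (μ - 1) ≤ (μ - 1) * s ^ (μ - 1 - 1) * (a - s) := by
            linarith
          have hsm : s ^ (μ - 1 - 1) ≤ (a / 4) ^ (μ - 1 - 1) :=
            Real.rpow_le_rpow_of_nonpos (by linarith) hsge (by linarith)
          have hq : (a / 4) ^ (μ - 1 - 1) ≤ 4 * a ^ (μ - 2) := by
            rw [hsub, Real.div_rpow ha (by norm_num)]
            have h4pos : (0:ℝ) < (4:ℝ) ^ (μ - 2) := Real.rpow_pos_of_pos (by norm_num) _
            have h4m : (4:ℝ) ^ (-1:ℝ) ≤ (4:ℝ) ^ (μ - 2) :=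
              Real.rpow_le_rpow_of_exponent_le (by norm_num) (by linarith)
            rw [Real.rpow_neg_one] at h4m
            rw [div_le_iff₀ h4pos]
            linarith [mul_le_mul_of_nonneg_left h4m haθ2]
          have hsm2 : (μ - 1) * s ^ (μ - 1 - 1) ≤ (μ - 1) * (4 * a ^ (μ - 2)) :=
            mul_le_mul_of_nonneg_left (hsm.trans hq) hμθ
          have hfac2 : a ^ (μ - 1) - s ^ (μ - 1) ≤ (μ - 1) * (4 * a ^ (μ - 2)) * (a - s) :=
            hfac.trans (mul_le_mul_of_nonneg_right hsm2 (by linarith))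
          have h2 := mul_le_mul_of_nonneg_right hfac2 (by linarith : (0:ℝ) ≤ a - s)
          have hKX := mul_le_mul_of_nonneg_right hK4 hsq0
          linarith [h2, hKX]
      · have hK5 : (μ - 1) * (4:ℝ) ^ (μ - 1) ≤ K := by rw [hK]; exact Kfact5 hμ
        have hK1 : μ - 1 ≤ K := by rw [hK]; exact Kfact1 hμ
        rcases le_total a s with has | has
        · have h := tangent_le_rpow hθ1 ha hspos
          have hfac : s ^ (μ - 1) - a ^ (μ - 1) ≤ (μ - 1) * s ^ (μ - 1 - 1) * (s - a) := by
            linarith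
          have hsm : s ^ (μ - 1 - 1) ≤ (4:ℝ) ^ (μ - 1) * a ^ (μ - 2) := by
            rw [hsub]
            calc s ^ (μ - 2) ≤ (4 * a) ^ (μ - 2) :=
                  Real.rpow_le_rpow hspos.le hsle (by linarith)
              _ = (4:ℝ) ^ (μ - 2) * a ^ (μ - 2) := Real.mul_rpow (by norm_num) ha
              _ ≤ (4:ℝ) ^ (μ - 1) * a ^ (μ - 2) := by
                  have h44 : (4:ℝ) ^ (μ - 2) ≤ (4:ℝ) ^ (μ - 1) :=
                    Real.rpow_le_rpow_of_exponent_le (by norm_num) (by linarith)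
                  exact mul_le_mul_of_nonneg_right h44 haθ2
          have hsm2 : (μ - 1) * s ^ (μ - 1 - 1) ≤ (μ - 1) * ((4:ℝ) ^ (μ - 1) * a ^ (μ - 2)) :=
            mul_le_mul_of_nonneg_left hsm (by linarith)
          have hfac2 : s ^ (μ - 1) - a ^ (μ - 1) ≤
              (μ - 1) * ((4:ℝ) ^ (μ - 1) * a ^ (μ - 2)) * (s - a) :=
            hfac.trans (mul_le_mul_of_nonneg_right hsm2 (by linarith))
          have h2 := mul_le_mul_of_nonneg_right hfac2 (by linarith : (0:ℝ) ≤ s - a)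
          have hKX := mul_le_mul_of_nonneg_right hK5 hsq0
          linarith [h2, hKX]
        · have h := tangent_le_rpow hθ1 hs0 ha'
          rw [hsub] at h
          have hfac : a ^ (μ - 1) - s ^ (μ - 1) ≤ (μ - 1) * a ^ (μ - 2) * (a - s) := by
            linarith
          have h2 := mul_le_mul_of_nonneg_right hfac (by linarith : (0:ℝ) ≤ a - s)
          have hKX := mul_le_mul_of_nonneg_right hK1 hsq0
          linarith [h2, hKX]
    -- combine
    have ha1 : a ^ (μ - 2) * a = a ^ (μ - 1) := by
      rw [show μ - 1 = μ - 2 + 1 by ring, Real.rpow_add_one ha'.ne']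
    have hsa2 : s - a = c - 2 * b := by rw [hsdef]; ring
    have hid : μ * s ^ (μ - 1) * (s - a) + 2 * μ * a ^ (μ - 1) * b
        = μ * ((s ^ (μ - 1) - a ^ (μ - 1)) * (s - a)) + μ * (a ^ (μ - 1) * c) := by
      rw [hsa2]; ring
    have huv : Real.sqrt a * Real.sqrt c ≤ a / 2 := by
      nlinarith [mul_nonneg hu0 (show (0:ℝ) ≤ Real.sqrt a / 2 - Real.sqrt c by linarith), hu2]
    have h7 : (s - a) ^ 2 ≤ 7 * (a * c) := by
      rw [hsa2]
      have f1 : 4 * b ^ 2 ≤ 4 * (a * c) := by linarith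
      have f2 : c * (4 * c) ≤ c * a := mul_le_mul_of_nonneg_left hc4.le hc
      have f3 : c * (-b) ≤ c * (Real.sqrt a * Real.sqrt c) :=
        mul_le_mul_of_nonneg_left (by linarith) hc
      have f4 : c * (Real.sqrt a * Real.sqrt c) ≤ c * (a / 2) :=
        mul_le_mul_of_nonneg_left huv hc
      nlinarith [f1, f2, f3, f4]
    have hK7 : a ^ (μ - 2) * (s - a) ^ 2 ≤ 7 * (a ^ (μ - 1) * c) := by
      have h1 := mul_le_mul_of_nonneg_left h7 haθ2
      have h2 : a ^ (μ - 2) * (7 * (a * c)) = 7 * (a ^ (μ - 2) * a * c) := by ring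
      rw [h2, ha1] at h1
      linarith
    have hbig := mul_le_mul_of_nonneg_left hK7 (mul_nonneg hμ0.le hK0)
    have hmuT := mul_le_mul_of_nonneg_left hkey hμ0.le
    have hac0 : 0 ≤ a ^ (μ - 1) * c := mul_nonneg haθ hc
    have hCfin := mul_le_mul_of_nonneg_right hCK hac0
    have hCc : 0 ≤ C * c ^ μ := mul_nonneg (by linarith) hcμ0
    linarith [hD, hid, hmuT, hbig, hCfin, hCc]

lemma two_rpow_split {p q t : ℝ} (hp : 0 ≤ p) (hq : 0 ≤ q) (ht : 0 ≤ t) :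
    (p + q) ^ t ≤ 2 ^ t * (p ^ t + q ^ t) := by
  have h2 : (0:ℝ) ≤ 2 ^ t := Real.rpow_nonneg (by norm_num) _
  rcases le_total p q with h | h
  · calc (p + q) ^ t ≤ (2 * q) ^ t := Real.rpow_le_rpow (by linarith) (by linarith) ht
      _ = 2 ^ t * q ^ t := Real.mul_rpow (by norm_num) hq
      _ ≤ 2 ^ t * (p ^ t + q ^ t) := by
          have := Real.rpow_nonneg hp t
          nlinarith
  · calc (p + q) ^ t ≤ (2 * p) ^ t := Real.rpow_le_rpow (by linarith) (by linarith) ht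
      _ = 2 ^ t * p ^ t := Real.mul_rpow (by norm_num) hp
      _ ≤ 2 ^ t * (p ^ t + q ^ t) := by
          have := Real.rpow_nonneg hq t
          nlinarith

theorem convolution_taylor_bound (N : ℕ) (hN : 1 ≤ N) (lam : ℝ) (hlam : 2 ≤ lam) :
    ∃ κ : ℝ, 0 < κ ∧
      ∀ ρ : EuclideanSpace ℝ (Fin N) → ℝ,
        (∀ x, 0 ≤ ρ x) → Integrable ρ → (∫ x, ρ x) = 1 →
        (∫ x, ρ x • x) = 0 →
        Integrable (fun y => ‖y‖ ^ 2 * ρ y) →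
        Integrable (fun y => ‖y‖ ^ lam * ρ y) →
        ∀ x : EuclideanSpace ℝ (Fin N),
          0 ≤ (∫ y, ‖x - y‖ ^ lam / lam * ρ y) - ‖x‖ ^ lam / lam ∧
          (∫ y, ‖x - y‖ ^ lam / lam * ρ y) - ‖x‖ ^ lam / lam ≤
            κ * ((∫ y, ‖y‖ ^ 2 * ρ y) * ‖x‖ ^ (lam - 2) +
              ∫ y, ‖y‖ ^ lam * ρ y) := by
  have hlam0 : (0:ℝ) < lam := by linarith
  have hμ : 1 ≤ lam / 2 := by linarith
  obtain ⟨C, hC0, hC⟩ := core_scalar (lam / 2) hμ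
  refine ⟨C, hC0, ?_⟩
  intro ρ hρ0 hρint hρ1 hmean hm2 hmlam x
  -- power conversions
  have hpow : ∀ t : ℝ, 0 ≤ t → ((t ^ 2 : ℝ)) ^ (lam / 2) = t ^ lam := by
    intro t ht
    have h1 : ((2:ℕ):ℝ) * (lam / 2) = lam := by push_cast; ring
    rw [← Real.rpow_natCast t 2, ← Real.rpow_mul ht, h1]
  have hpowθ : ∀ t : ℝ, 0 ≤ t → ((t ^ 2 : ℝ)) ^ (lam / 2 - 1) = t ^ (lam - 2) := by
    intro t ht
    have h1 : ((2:ℕ):ℝ) * (lam / 2 - 1) = lam - 2 := by push_cast; ring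
    rw [← Real.rpow_natCast t 2, ← Real.rpow_mul ht, h1]
  -- pointwise bounds
  have hpt : ∀ y : EuclideanSpace ℝ (Fin N),
      (0 ≤ ‖x - y‖ ^ lam - ‖x‖ ^ lam + lam * ‖x‖ ^ (lam - 2) * (inner ℝ x y : ℝ) ∧
       ‖x - y‖ ^ lam - ‖x‖ ^ lam + lam * ‖x‖ ^ (lam - 2) * (inner ℝ x y : ℝ) ≤
         C * (‖x‖ ^ (lam - 2) * ‖y‖ ^ 2 + ‖y‖ ^ lam)) := by
    intro y
    have hb : (inner ℝ x y : ℝ) ^ 2 ≤ ‖x‖ ^ 2 * ‖y‖ ^ 2 := by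
      have h1 := abs_real_inner_le_norm x y
      have h2 : |(inner ℝ x y : ℝ)| ^ 2 = (inner ℝ x y : ℝ) ^ 2 := sq_abs _
      nlinarith [abs_nonneg (inner ℝ x y : ℝ), norm_nonneg x, norm_nonneg y]
    obtain ⟨hlo, hup⟩ := hC (‖x‖ ^ 2) (inner ℝ x y : ℝ) (‖y‖ ^ 2)
      (by positivity) (by positivity) hb
    have e1 := hpow ‖x - y‖ (norm_nonneg _)
    have e2 := hpow ‖x‖ (norm_nonneg _)
    have e3 := hpow ‖y‖ (norm_nonneg _)
    have e4 := hpowθ ‖x‖ (norm_nonneg _)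
    have h2l : 2 * (lam / 2) = lam := by ring
    rw [← norm_sub_sq_real, e1, e2, e4, h2l] at hlo
    rw [← norm_sub_sq_real, e1, e2, e3, e4, h2l] at hup
    exact ⟨by linarith, by linarith⟩
  -- integrability facts
  have hρm := hρint.aestronglyMeasurable
  have hcont1 : Continuous fun y : EuclideanSpace ℝ (Fin N) => ‖x - y‖ ^ lam := by
    apply Continuous.rpow_const (by continuity)
    intro y; right; linarith
  have Int1 : Integrable (fun y => ‖x - y‖ ^ lam * ρ y) := by
    have hmeas : AEStronglyMeasurable (fun y : EuclideanSpace ℝ (Fin N) => ‖x - y‖ ^ lam * ρ y)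
        volume := hcont1.aestronglyMeasurable.mul hρm
    have hgI : Integrable (fun y : EuclideanSpace ℝ (Fin N) =>
        (2:ℝ) ^ lam * (‖x‖ ^ lam * ρ y + ‖y‖ ^ lam * ρ y)) volume :=
      ((hρint.const_mul (‖x‖ ^ lam)).add hmlam).const_mul ((2:ℝ) ^ lam)
    apply Integrable.mono' hgI hmeas
    filter_upwards with y
    have h1 : ‖x - y‖ ^ lam ≤ 2 ^ lam * (‖x‖ ^ lam + ‖y‖ ^ lam) := by
      calc ‖x - y‖ ^ lam ≤ (‖x‖ + ‖y‖) ^ lam :=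
            Real.rpow_le_rpow (norm_nonneg _) (norm_sub_le x y) (by linarith)
        _ ≤ 2 ^ lam * (‖x‖ ^ lam + ‖y‖ ^ lam) :=
            two_rpow_split (norm_nonneg _) (norm_nonneg _) (by linarith)
    have h2 : 0 ≤ ‖x - y‖ ^ lam * ρ y :=
      mul_nonneg (Real.rpow_nonneg (norm_nonneg _) _) (hρ0 y)
    rw [Real.norm_of_nonneg h2]
    have := mul_le_mul_of_nonneg_right h1 (hρ0 y)
    calc ‖x - y‖ ^ lam * ρ y ≤ 2 ^ lam * (‖x‖ ^ lam + ‖y‖ ^ lam) * ρ y := this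
      _ = 2 ^ lam * (‖x‖ ^ lam * ρ y + ‖y‖ ^ lam * ρ y) := by ring
  have hyb : ∀ y : EuclideanSpace ℝ (Fin N), ‖y‖ ≤ 1 + ‖y‖ ^ 2 := by
    intro y; nlinarith [sq_nonneg (‖y‖ - 1), norm_nonneg y]
  have Int2 : Integrable (fun y => (inner ℝ x y : ℝ) * ρ y) := by
    have hmeas : AEStronglyMeasurable (fun y : EuclideanSpace ℝ (Fin N) => (inner ℝ x y : ℝ) * ρ y)
        volume := ((innerSL ℝ x).continuous.aestronglyMeasurable).mul hρm
    have hgI : Integrable (fun y : EuclideanSpace ℝ (Fin N) =>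
        ‖x‖ * ρ y + ‖x‖ * (‖y‖ ^ 2 * ρ y)) volume :=
      (hρint.const_mul ‖x‖).add (hm2.const_mul ‖x‖)
    apply Integrable.mono' hgI hmeas
    filter_upwards with y
    have h1 : |(inner ℝ x y : ℝ) * ρ y| ≤ ‖x‖ * ‖y‖ * ρ y := by
      rw [abs_mul, abs_of_nonneg (hρ0 y)]
      exact mul_le_mul_of_nonneg_right (abs_real_inner_le_norm x y) (hρ0 y)
    have h2 : ‖x‖ * ‖y‖ * ρ y ≤ ‖x‖ * ρ y + ‖x‖ * (‖y‖ ^ 2 * ρ y) := by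
      have := mul_le_mul_of_nonneg_right (hyb y) (hρ0 y)
      nlinarith [mul_le_mul_of_nonneg_left (mul_le_mul_of_nonneg_right (hyb y) (hρ0 y))
        (norm_nonneg x)]
    calc ‖(inner ℝ x y : ℝ) * ρ y‖ = |(inner ℝ x y : ℝ) * ρ y| := rfl
      _ ≤ ‖x‖ * ‖y‖ * ρ y := h1
      _ ≤ ‖x‖ * ρ y + ‖x‖ * (‖y‖ ^ 2 * ρ y) := h2
  have IntV : Integrable (fun y : EuclideanSpace ℝ (Fin N) => ρ y • y) := by
    have hmeas : AEStronglyMeasurable (fun y : EuclideanSpace ℝ (Fin N) => ρ y • y) volume :=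
      hρm.smul aestronglyMeasurable_id
    have hgI : Integrable (fun y : EuclideanSpace ℝ (Fin N) => ρ y + ‖y‖ ^ 2 * ρ y) volume :=
      hρint.add hm2
    apply Integrable.mono' hgI hmeas
    filter_upwards with y
    rw [norm_smul, Real.norm_of_nonneg (hρ0 y)]
    have := mul_le_mul_of_nonneg_left (hyb y) (hρ0 y)
    nlinarith [mul_nonneg (hρ0 y) (sq_nonneg ‖y‖)]
  have hinner0 : (∫ y, (inner ℝ x y : ℝ) * ρ y) = 0 := by
    have hcomm := ContinuousLinearMap.integral_comp_comm (innerSL ℝ x) IntV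
    simp only [innerSL_apply_apply, inner_smul_right] at hcomm
    rw [hmean] at hcomm
    simp only [inner_zero_right] at hcomm
    calc (∫ y, (inner ℝ x y : ℝ) * ρ y) = ∫ y, ρ y * (inner ℝ x y : ℝ) := by
          congr 1; funext y; ring
      _ = 0 := hcomm
  -- integral computations
  have hgint : Integrable (fun y =>
      (‖x - y‖ ^ lam - ‖x‖ ^ lam + lam * ‖x‖ ^ (lam - 2) * (inner ℝ x y : ℝ)) * ρ y) := by
    have he : (fun y => (‖x - y‖ ^ lam - ‖x‖ ^ lam
        + lam * ‖x‖ ^ (lam - 2) * (inner ℝ x y : ℝ)) * ρ y)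
        = fun y => (‖x - y‖ ^ lam * ρ y - ‖x‖ ^ lam * ρ y)
          + (lam * ‖x‖ ^ (lam - 2)) * ((inner ℝ x y : ℝ) * ρ y) := by
      funext y; ring
    rw [he]
    exact (Int1.sub (hρint.const_mul _)).add (Int2.const_mul _)
  have hgval : (∫ y, (‖x - y‖ ^ lam - ‖x‖ ^ lam
      + lam * ‖x‖ ^ (lam - 2) * (inner ℝ x y : ℝ)) * ρ y)
      = (∫ y, ‖x - y‖ ^ lam * ρ y) - ‖x‖ ^ lam := by
    have he : (fun y => (‖x - y‖ ^ lam - ‖x‖ ^ lam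
        + lam * ‖x‖ ^ (lam - 2) * (inner ℝ x y : ℝ)) * ρ y)
        = fun y => (‖x - y‖ ^ lam * ρ y - ‖x‖ ^ lam * ρ y)
          + (lam * ‖x‖ ^ (lam - 2)) * ((inner ℝ x y : ℝ) * ρ y) := by
      funext y; ring
    have i1 : Integrable (fun y : EuclideanSpace ℝ (Fin N) =>
        ‖x - y‖ ^ lam * ρ y - ‖x‖ ^ lam * ρ y) volume := Int1.sub (hρint.const_mul _)
    have i2 : Integrable (fun y : EuclideanSpace ℝ (Fin N) =>
        (lam * ‖x‖ ^ (lam - 2)) * ((inner ℝ x y : ℝ) * ρ y)) volume := Int2.const_mul _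
    have i3 : Integrable (fun y : EuclideanSpace ℝ (Fin N) => ‖x‖ ^ lam * ρ y) volume :=
      hρint.const_mul _
    rw [he, integral_add i1 i2, integral_sub Int1 i3, integral_const_mul, integral_const_mul,
      hρ1, hinner0]
    ring
  have hsplit : (∫ y, ‖x - y‖ ^ lam / lam * ρ y)
      = (1 / lam) * ∫ y, ‖x - y‖ ^ lam * ρ y := by
    rw [← integral_const_mul]
    congr 1; funext y; ring
  have hQ : (∫ y, ‖x - y‖ ^ lam / lam * ρ y) - ‖x‖ ^ lam / lam
      = (1 / lam) * ∫ y, (‖x - y‖ ^ lam - ‖x‖ ^ lam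
          + lam * ‖x‖ ^ (lam - 2) * (inner ℝ x y : ℝ)) * ρ y := by
    rw [hsplit, hgval]; ring
  have hgnn : 0 ≤ ∫ y, (‖x - y‖ ^ lam - ‖x‖ ^ lam
      + lam * ‖x‖ ^ (lam - 2) * (inner ℝ x y : ℝ)) * ρ y := by
    apply integral_nonneg
    intro y
    exact mul_nonneg (hpt y).1 (hρ0 y)
  constructor
  · rw [hQ]
    exact mul_nonneg (by positivity) hgnn
  · have hdomint : Integrable (fun y =>
        C * (‖x‖ ^ (lam - 2) * (‖y‖ ^ 2 * ρ y) + ‖y‖ ^ lam * ρ y)) :=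
      ((hm2.const_mul (‖x‖ ^ (lam - 2))).add hmlam).const_mul C
    have hle : (∫ y, (‖x - y‖ ^ lam - ‖x‖ ^ lam
        + lam * ‖x‖ ^ (lam - 2) * (inner ℝ x y : ℝ)) * ρ y)
        ≤ ∫ y, C * (‖x‖ ^ (lam - 2) * (‖y‖ ^ 2 * ρ y) + ‖y‖ ^ lam * ρ y) := by
      apply integral_mono hgint hdomint
      intro y
      have h1 := mul_le_mul_of_nonneg_right (hpt y).2 (hρ0 y)
      calc (‖x - y‖ ^ lam - ‖x‖ ^ lam + lam * ‖x‖ ^ (lam - 2) * (inner ℝ x y : ℝ)) * ρ y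
          ≤ C * (‖x‖ ^ (lam - 2) * ‖y‖ ^ 2 + ‖y‖ ^ lam) * ρ y := h1
        _ = C * (‖x‖ ^ (lam - 2) * (‖y‖ ^ 2 * ρ y) + ‖y‖ ^ lam * ρ y) := by ring
    have hrhs : (∫ y, C * (‖x‖ ^ (lam - 2) * (‖y‖ ^ 2 * ρ y) + ‖y‖ ^ lam * ρ y))
        = C * ((∫ y, ‖y‖ ^ 2 * ρ y) * ‖x‖ ^ (lam - 2) + ∫ y, ‖y‖ ^ lam * ρ y) := by
      have i4 : Integrable (fun y : EuclideanSpace ℝ (Fin N) =>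
          ‖x‖ ^ (lam - 2) * (‖y‖ ^ 2 * ρ y)) volume := hm2.const_mul _
      rw [integral_const_mul, integral_add i4 hmlam, integral_const_mul]
      ring
    rw [hQ]
    have h1lam : (1 / lam) * (∫ y, (‖x - y‖ ^ lam - ‖x‖ ^ lam
        + lam * ‖x‖ ^ (lam - 2) * (inner ℝ x y : ℝ)) * ρ y)
        ≤ ∫ y, (‖x - y‖ ^ lam - ‖x‖ ^ lam
          + lam * ‖x‖ ^ (lam - 2) * (inner ℝ x y : ℝ)) * ρ y := by
      have h2 : 1 / lam ≤ 1 := by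
        rw [div_le_one hlam0]; linarith
      nlinarith
    calc (1 / lam) * (∫ y, (‖x - y‖ ^ lam - ‖x‖ ^ lam
          + lam * ‖x‖ ^ (lam - 2) * (inner ℝ x y : ℝ)) * ρ y)
        ≤ ∫ y, (‖x - y‖ ^ lam - ‖x‖ ^ lam
          + lam * ‖x‖ ^ (lam - 2) * (inner ℝ x y : ℝ)) * ρ y := h1lam
      _ ≤ ∫ y, C * (‖x‖ ^ (lam - 2) * (‖y‖ ^ 2 * ρ y) + ‖y‖ ^ lam * ρ y) := hle
      _ = C * ((∫ y, ‖y‖ ^ 2 * ρ y) * ‖x‖ ^ (lam - 2) + ∫ y, ‖y‖ ^ lam * ρ y) := hrhs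
end

section
/- Let N ≥ 1, λ > 0, q ∈ (N/(N+λ), 1), and let ρ_∞ be a nonnegative radially symmetric non-increasing probability density on ℝ^N with finite λ-moment. Then ∫∫ |x−y|^λ ρ_∞(x)ρ_∞(y) dx dy ≥ ∫ |x|^λ ρ_∞(x) dx. -/
open Real MeasureTheory Metric Set

section Aux

variable {N : ℕ}

/-- The `ρ`-mass of a ball centered anywhere is at most the mass of the ball of the
same radius centered at the origin, when `ρ` is radially non-increasing. -/
lemma ball_mass_le (hN : 1 ≤ N) (ρ : EuclideanSpace ℝ (Fin N) → ℝ)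
    (hρ0 : ∀ x, 0 ≤ ρ x)
    (hmono : ∀ x y : EuclideanSpace ℝ (Fin N), ‖x‖ ≤ ‖y‖ → ρ y ≤ ρ x)
    (x : EuclideanSpace ℝ (Fin N)) (t : ℝ) :
    (volume.withDensity fun a => ENNReal.ofReal (ρ a)) (closedBall x t)
      ≤ (volume.withDensity fun a => ENNReal.ofReal (ρ a)) (closedBall 0 t) := by
  rcases lt_or_ge t 0 with ht | ht
  · simp [closedBall_eq_empty.2 ht]
  set μ := volume.withDensity fun a : EuclideanSpace ℝ (Fin N) => ENNReal.ofReal (ρ a) with hμ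
  set A := closedBall x t with hA'
  set B := closedBall (0 : EuclideanSpace ℝ (Fin N)) t with hB'
  have hA : MeasurableSet A := measurableSet_closedBall
  have hB : MeasurableSet B := measurableSet_closedBall
  have hNpos : 0 < N := hN
  set e : EuclideanSpace ℝ (Fin N) := EuclideanSpace.single (⟨0, hNpos⟩ : Fin N) (1 : ℝ) with he
  have hz : ‖(t • e : EuclideanSpace ℝ (Fin N))‖ = t := by
    rw [norm_smul, he, EuclideanSpace.norm_single]
    simp [abs_of_nonneg ht]
  set c := ρ (t • e) with hc
  -- Lebesgue volumes of the symmetric differences agree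
  have hvolAB : volume A = volume B := Measure.addHaar_closedBall_center volume x t
  have hfin : volume (A ∩ B) ≠ ⊤ :=
    ((measure_mono inter_subset_right).trans_lt measure_closedBall_lt_top).ne
  have hvol : volume (A \ B) = volume (B \ A) := by
    have h1 : volume (A \ B) + volume (A ∩ B) = volume A := measure_diff_add_inter A hB
    have h2 : volume (B \ A) + volume (B ∩ A) = volume B := measure_diff_add_inter B hA
    rw [Set.inter_comm B A] at h2
    have h3 : volume (A \ B) + volume (A ∩ B) = volume (B \ A) + volume (A ∩ B) := by
      rw [h1, h2, hvolAB]
    exact WithTop.add_right_cancel hfin h3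
  have hABm : MeasurableSet (A \ B) := hA.diff hB
  have hBAm : MeasurableSet (B \ A) := hB.diff hA
  have hup : μ (A \ B) ≤ ENNReal.ofReal c * volume (A \ B) := by
    rw [hμ, withDensity_apply _ hABm]
    calc ∫⁻ a in A \ B, ENNReal.ofReal (ρ a) ∂volume
        ≤ ∫⁻ _ in A \ B, ENNReal.ofReal c ∂volume := by
          refine setLIntegral_mono measurable_const fun a ha => ?_
          refine ENNReal.ofReal_le_ofReal (hmono _ _ ?_)
          rw [hz]
          have hnot : a ∉ B := ha.2
          rw [hB', mem_closedBall_zero_iff] at hnot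
          exact (lt_of_not_ge hnot).le
      _ = ENNReal.ofReal c * volume (A \ B) := setLIntegral_const _ _
  have hdown : ENNReal.ofReal c * volume (B \ A) ≤ μ (B \ A) := by
    rw [hμ, withDensity_apply _ hBAm]
    calc ENNReal.ofReal c * volume (B \ A)
        = ∫⁻ _ in B \ A, ENNReal.ofReal c ∂volume := (setLIntegral_const _ _).symm
      _ ≤ ∫⁻ a in B \ A, ENNReal.ofReal (ρ a) ∂volume := by
          refine setLIntegral_mono' hBAm fun a ha => ?_
          refine ENNReal.ofReal_le_ofReal (hmono a (t • e) ?_)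
          rw [hz]
          have := ha.1
          rwa [hB', mem_closedBall_zero_iff] at this
  have key : μ (A \ B) ≤ μ (B \ A) := by
    refine hup.trans ?_
    rw [hvol]
    exact hdown
  have h1 : μ (A \ B) + μ (A ∩ B) = μ A := measure_diff_add_inter A hB
  have h2 : μ (B \ A) + μ (B ∩ A) = μ B := measure_diff_add_inter B hA
  calc μ A = μ (A \ B) + μ (A ∩ B) := h1.symm
    _ ≤ μ (B \ A) + μ (A ∩ B) := add_le_add_left key _
    _ = μ (B \ A) + μ (B ∩ A) := by rw [Set.inter_comm]
    _ = μ B := h2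

/-- Layer-cake comparison: the shifted moment lintegral dominates the centered one. -/
lemma shifted_lintegral_ge (hN : 1 ≤ N) (lam : ℝ) (hlam : 0 < lam)
    (ρ : EuclideanSpace ℝ (Fin N) → ℝ) (hρ0 : ∀ x, 0 ≤ ρ x)
    (hmeas : Measurable ρ) (hρint : Integrable ρ)
    (hmono : ∀ x y : EuclideanSpace ℝ (Fin N), ‖x‖ ≤ ‖y‖ → ρ y ≤ ρ x)
    (x : EuclideanSpace ℝ (Fin N)) :
    ∫⁻ y, ENNReal.ofReal (‖y‖ ^ lam * ρ y)
      ≤ ∫⁻ y, ENNReal.ofReal (‖y - x‖ ^ lam * ρ y) := by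
  set μ := volume.withDensity fun a : EuclideanSpace ℝ (Fin N) => ENNReal.ofReal (ρ a) with hμ
  haveI hfinμ : IsFiniteMeasure μ := by
    constructor
    rw [hμ, withDensity_apply _ MeasurableSet.univ, Measure.restrict_univ]
    refine lt_of_le_of_lt (lintegral_mono fun a => ?_) hρint.2
    exact (Real.enorm_eq_ofReal (hρ0 a)).ge
  have hrpowc : Continuous fun r : ℝ => r ^ lam := Real.continuous_rpow_const hlam.le
  have hconv : ∀ v : EuclideanSpace ℝ (Fin N),
      ∫⁻ y, ENNReal.ofReal (‖y - v‖ ^ lam * ρ y) ∂volume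
        = ENNReal.ofReal lam *
            ∫⁻ t in Ioi (0 : ℝ), μ {a | t < ‖a - v‖} * ENNReal.ofReal (t ^ (lam - 1)) := by
    intro v
    have hcont : Measurable fun y : EuclideanSpace ℝ (Fin N) => ‖y - v‖ :=
      ((continuous_id.sub continuous_const).norm).measurable
    have hg : Measurable fun y : EuclideanSpace ℝ (Fin N) => ENNReal.ofReal (‖y - v‖ ^ lam) :=
      ((hrpowc.comp ((continuous_id.sub continuous_const).norm)).measurable).ennreal_ofReal
    have h1 : ∫⁻ y, ENNReal.ofReal (‖y - v‖ ^ lam) ∂μ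
        = ∫⁻ y, ENNReal.ofReal (‖y - v‖ ^ lam * ρ y) ∂volume := by
      rw [hμ, lintegral_withDensity_eq_lintegral_mul₀ hmeas.ennreal_ofReal.aemeasurable
        hg.aemeasurable]
      refine lintegral_congr fun y => ?_
      simp only [Pi.mul_apply]
      rw [mul_comm, ← ENNReal.ofReal_mul (Real.rpow_nonneg (norm_nonneg _) _)]
    have h2 := lintegral_rpow_eq_lintegral_meas_lt_mul μ
      (f := fun y : EuclideanSpace ℝ (Fin N) => ‖y - v‖)
      (ae_of_all _ fun y => norm_nonneg _) hcont.aemeasurable hlam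
    rw [← h1, h2]
  have hpt : ∀ t : ℝ, μ {a : EuclideanSpace ℝ (Fin N) | t < ‖a‖}
      ≤ μ {a : EuclideanSpace ℝ (Fin N) | t < ‖a - x‖} := by
    intro t
    have hc1 : {a : EuclideanSpace ℝ (Fin N) | t < ‖a‖} = (closedBall (0 : EuclideanSpace ℝ (Fin N)) t)ᶜ := by
      ext a; simp [mem_closedBall_zero_iff, not_le]
    have hc2 : {a : EuclideanSpace ℝ (Fin N) | t < ‖a - x‖} = (closedBall x t)ᶜ := by
      ext a; simp [mem_closedBall, dist_eq_norm, not_le]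
    rw [hc1, hc2, measure_compl measurableSet_closedBall (measure_ne_top μ _),
      measure_compl measurableSet_closedBall (measure_ne_top μ _)]
    exact tsub_le_tsub_left (ball_mass_le hN ρ hρ0 hmono x t) _
  have hconv0 := hconv 0
  simp only [sub_zero] at hconv0
  calc ∫⁻ y, ENNReal.ofReal (‖y‖ ^ lam * ρ y)
      = ENNReal.ofReal lam *
          ∫⁻ t in Ioi (0 : ℝ), μ {a | t < ‖a‖} * ENNReal.ofReal (t ^ (lam - 1)) := hconv0
    _ ≤ ENNReal.ofReal lam *
          ∫⁻ t in Ioi (0 : ℝ), μ {a | t < ‖a - x‖} * ENNReal.ofReal (t ^ (lam - 1)) :=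
        mul_le_mul_right (lintegral_mono fun t => mul_le_mul_left (hpt t) _) _
    _ = ∫⁻ y, ENNReal.ofReal (‖y - x‖ ^ lam * ρ y) := (hconv x).symm

end Aux

theorem interaction_ge_moment (N : ℕ) (hN : 1 ≤ N) (lam q : ℝ)
    (hlam : 0 < lam) (hq1 : (N : ℝ) / (N + lam) < q) (hq2 : q < 1)
    (ρ : EuclideanSpace ℝ (Fin N) → ℝ) (hρ0 : ∀ x, 0 ≤ ρ x)
    (hρint : Integrable ρ) (hρmass : ∫ x, ρ x = 1)
    (hrad : ∀ x y : EuclideanSpace ℝ (Fin N), ‖x‖ = ‖y‖ → ρ x = ρ y)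
    (hmono : ∀ x y : EuclideanSpace ℝ (Fin N), ‖x‖ ≤ ‖y‖ → ρ y ≤ ρ x)
    (hmom : Integrable (fun x => ‖x‖ ^ lam * ρ x)) :
    ∫ x, ∫ y, ‖x - y‖ ^ lam * ρ x * ρ y ≥ ∫ x, ‖x‖ ^ lam * ρ x := by
  classical
  have hNpos : 0 < N := hN
  -- measurability of ρ from radial monotonicity
  set e : EuclideanSpace ℝ (Fin N) := EuclideanSpace.single (⟨0, hNpos⟩ : Fin N) (1 : ℝ) with he
  have hnorme : ‖e‖ = 1 := by rw [he, EuclideanSpace.norm_single]; norm_num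
  have hns : ∀ r : ℝ, ‖(max r 0 • e : EuclideanSpace ℝ (Fin N))‖ = max r 0 := fun r => by
    rw [norm_smul, hnorme, mul_one, Real.norm_eq_abs, abs_of_nonneg (le_max_right r 0)]
  have hmeas : Measurable ρ := by
    have hg : Antitone fun r : ℝ => ρ (max r 0 • e) := by
      intro r s hrs
      apply hmono
      rw [hns, hns]
      exact max_le_max hrs le_rfl
    have hρeq : ρ = (fun r : ℝ => ρ (max r 0 • e)) ∘ fun a => ‖a‖ := by
      funext a
      refine hrad _ _ ?_
      rw [hns, max_eq_left (norm_nonneg a)]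
    rw [hρeq]
    exact hg.measurable.comp measurable_norm
  have hrpowc : Continuous fun r : ℝ => r ^ lam := Real.continuous_rpow_const hlam.le
  -- elementary rpow estimate
  have hsum : ∀ a b : ℝ, 0 ≤ a → 0 ≤ b → (a + b) ^ lam ≤ 2 ^ lam * (a ^ lam + b ^ lam) := by
    intro a b ha hb
    have h1 : a + b ≤ 2 * max a b := by
      rcases le_total a b with h | h
      · rw [max_eq_right h]; linarith
      · rw [max_eq_left h]; linarith
    calc (a + b) ^ lam ≤ (2 * max a b) ^ lam :=
          Real.rpow_le_rpow (by linarith) h1 hlam.le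
      _ = 2 ^ lam * (max a b) ^ lam := Real.mul_rpow (by norm_num) (le_max_of_le_left ha)
      _ ≤ 2 ^ lam * (a ^ lam + b ^ lam) := by
          refine mul_le_mul_of_nonneg_left ?_ (Real.rpow_nonneg (by norm_num) _)
          rcases le_total a b with h | h
          · rw [max_eq_right h]
            exact le_add_of_nonneg_left (Real.rpow_nonneg ha _)
          · rw [max_eq_left h]
            exact le_add_of_nonneg_right (Real.rpow_nonneg hb _)
  have hbound : ∀ x y : EuclideanSpace ℝ (Fin N),
      ‖y - x‖ ^ lam * ρ y ≤ 2 ^ lam * ‖x‖ ^ lam * ρ y + 2 ^ lam * (‖y‖ ^ lam * ρ y) := by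
    intro x y
    have h1 : ‖y - x‖ ≤ ‖y‖ + ‖x‖ := norm_sub_le _ _
    have h2 : ‖y - x‖ ^ lam ≤ 2 ^ lam * (‖y‖ ^ lam + ‖x‖ ^ lam) :=
      (Real.rpow_le_rpow (norm_nonneg _) h1 hlam.le).trans
        (hsum _ _ (norm_nonneg _) (norm_nonneg _))
    calc ‖y - x‖ ^ lam * ρ y ≤ 2 ^ lam * (‖y‖ ^ lam + ‖x‖ ^ lam) * ρ y :=
          mul_le_mul_of_nonneg_right h2 (hρ0 y)
      _ = 2 ^ lam * ‖x‖ ^ lam * ρ y + 2 ^ lam * (‖y‖ ^ lam * ρ y) := by ring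
  have hgmeas : ∀ x : EuclideanSpace ℝ (Fin N),
      Measurable fun y : EuclideanSpace ℝ (Fin N) => ‖y - x‖ ^ lam * ρ y := fun x =>
    ((hrpowc.comp ((continuous_id.sub continuous_const).norm)).measurable).mul hmeas
  have hgint : ∀ x : EuclideanSpace ℝ (Fin N),
      Integrable fun y : EuclideanSpace ℝ (Fin N) => ‖y - x‖ ^ lam * ρ y := by
    intro x
    refine Integrable.mono' ((hρint.const_mul (2 ^ lam * ‖x‖ ^ lam)).add
      (hmom.const_mul (2 ^ lam))) (hgmeas x).aestronglyMeasurable (ae_of_all _ fun y => ?_)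
    rw [Real.norm_eq_abs,
      abs_of_nonneg (mul_nonneg (Real.rpow_nonneg (norm_nonneg _) _) (hρ0 y))]
    exact hbound x y
  have hmomnn : ∀ y : EuclideanSpace ℝ (Fin N), 0 ≤ ‖y‖ ^ lam * ρ y := fun y =>
    mul_nonneg (Real.rpow_nonneg (norm_nonneg _) _) (hρ0 y)
  have hmommeas : Measurable fun y : EuclideanSpace ℝ (Fin N) => ‖y‖ ^ lam * ρ y :=
    ((hrpowc.comp continuous_norm).measurable).mul hmeas
  -- key pointwise (in x) inequality for the inner integral
  have hkey : ∀ x : EuclideanSpace ℝ (Fin N),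
      (∫ y, ‖y‖ ^ lam * ρ y) ≤ ∫ y, ‖y - x‖ ^ lam * ρ y := by
    intro x
    have hL := shifted_lintegral_ge hN lam hlam ρ hρ0 hmeas hρint hmono x
    rw [integral_eq_lintegral_of_nonneg_ae (ae_of_all _ hmomnn)
        hmommeas.aestronglyMeasurable,
      integral_eq_lintegral_of_nonneg_ae
        (ae_of_all _ fun y => mul_nonneg (Real.rpow_nonneg (norm_nonneg _) _) (hρ0 y))
        (hgmeas x).aestronglyMeasurable]
    exact ENNReal.toReal_mono (hgint x).lintegral_lt_top.ne hL
  have hinner : ∀ x : EuclideanSpace ℝ (Fin N),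
      (∫ y, ‖x - y‖ ^ lam * ρ x * ρ y) = ρ x * ∫ y, ‖y - x‖ ^ lam * ρ y := by
    intro x
    have hfun : (fun y => ‖x - y‖ ^ lam * ρ x * ρ y)
        = fun y : EuclideanSpace ℝ (Fin N) => ρ x * (‖y - x‖ ^ lam * ρ y) := by
      funext y
      rw [norm_sub_rev x y]; ring
    rw [hfun, integral_const_mul]
  -- upper bound for the inner integral
  have hIub : ∀ x : EuclideanSpace ℝ (Fin N),
      (∫ y, ‖y - x‖ ^ lam * ρ y) ≤ 2 ^ lam * ‖x‖ ^ lam + 2 ^ lam * ∫ y, ‖y‖ ^ lam * ρ y := by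
    intro x
    have h := integral_mono (hgint x) ((hρint.const_mul (2 ^ lam * ‖x‖ ^ lam)).add
      (hmom.const_mul (2 ^ lam))) (fun y => hbound x y)
    simp only [Pi.add_apply] at h
    rwa [integral_add (hρint.const_mul _) (hmom.const_mul _), integral_const_mul,
      integral_const_mul, hρmass, mul_one] at h
  -- measurability and integrability of the inner integral as a function of x
  have hfmeas : AEStronglyMeasurable
      (fun x : EuclideanSpace ℝ (Fin N) => ∫ y, ‖x - y‖ ^ lam * ρ x * ρ y) volume := by
    have hF : StronglyMeasurable fun p : EuclideanSpace ℝ (Fin N) × EuclideanSpace ℝ (Fin N) =>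
        ‖p.1 - p.2‖ ^ lam * ρ p.1 * ρ p.2 := by
      refine Measurable.stronglyMeasurable ?_
      exact (((hrpowc.comp ((continuous_fst.sub continuous_snd).norm)).measurable).mul
        (hmeas.comp measurable_fst)).mul (hmeas.comp measurable_snd)
    exact hF.integral_prod_right'.aestronglyMeasurable
  have hfnn : ∀ x : EuclideanSpace ℝ (Fin N), 0 ≤ ∫ y, ‖x - y‖ ^ lam * ρ x * ρ y := by
    intro x
    rw [hinner x]
    exact mul_nonneg (hρ0 x) (integral_nonneg fun y =>
      mul_nonneg (Real.rpow_nonneg (norm_nonneg _) _) (hρ0 y))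
  have hfint : Integrable fun x : EuclideanSpace ℝ (Fin N) =>
      ∫ y, ‖x - y‖ ^ lam * ρ x * ρ y := by
    refine Integrable.mono' ((hmom.const_mul (2 ^ lam)).add
      (hρint.const_mul (2 ^ lam * ∫ y, ‖y‖ ^ lam * ρ y))) hfmeas (ae_of_all _ fun x => ?_)
    rw [Real.norm_eq_abs, abs_of_nonneg (hfnn x), hinner x]
    calc ρ x * ∫ y, ‖y - x‖ ^ lam * ρ y
        ≤ ρ x * (2 ^ lam * ‖x‖ ^ lam + 2 ^ lam * ∫ y, ‖y‖ ^ lam * ρ y) :=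
          mul_le_mul_of_nonneg_left (hIub x) (hρ0 x)
      _ = 2 ^ lam * (‖x‖ ^ lam * ρ x) + 2 ^ lam * (∫ y, ‖y‖ ^ lam * ρ y) * ρ x := by ring
  -- assemble
  rw [ge_iff_le]
  have hflb : ∀ x : EuclideanSpace ℝ (Fin N),
      (∫ y, ‖y‖ ^ lam * ρ y) * ρ x ≤ ∫ y, ‖x - y‖ ^ lam * ρ x * ρ y := by
    intro x
    rw [hinner x, mul_comm]
    exact mul_le_mul_of_nonneg_left (hkey x) (hρ0 x)
  have h := integral_mono (hρint.const_mul _) hfint (fun x => hflb x)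
  rw [integral_const_mul, hρmass, mul_one] at h
  exact h
end
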